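/- Let G = {G_1,…,G_m} be a group structure on [p] with positive weights w, φ^G the overlapping group lasso norm with dual norm φ*, h_j = #{g : j ∈ G_g} the overlap degree of coordinate j, and H = diag(1/h_1,…,1/h_p). Then for every v ∈ ℝ^p, φ*(v) ≤ max_{g∈[m]} (1/w_g)‖(Hv)_{G_g}‖_2. Moreover, this bound is sharp: if v ≠ 0 and some group g₀ attaining the maximum max_{g∈[m]} (1/w_g)‖(Hv)_{G_g}‖_2 satisfies h_j = 1 for all j ∈ G_{g₀} and v_{G_{g₀}} ≠ 0, then φ*(v) = max_{g∈[m]} (1/w_g)‖(Hv)_{G_g}‖_2. -/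

import Mathlib

open Finset

/-- Euclidean norm of the subvector of `β` indexed by `T`. -/
noncomputable def subNorm {p : ℕ} (T : Finset (Fin p)) (β : Fin p → ℝ) : ℝ :=
  Real.sqrt (∑ j ∈ T, (β j) ^ 2)

/-- Overlapping group lasso norm `φ^G`. -/
noncomputable def glNorm {p m : ℕ} (G : Fin m → Finset (Fin p)) (w : Fin m → ℝ)
    (β : Fin p → ℝ) : ℝ :=
  ∑ g, w g * subNorm (G g) β

/-- Overlap degree `h_j = #{g : j ∈ G_g}` of coordinate `j`. -/
def overlapDeg {p m : ℕ} (G : Fin m → Finset (Fin p)) (j : Fin p) : ℕ :=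
  (univ.filter fun g => j ∈ G g).card

/-- The dual norm `φ*(v) = sup { βᵀv : φ^G(β) ≤ 1 }`. -/
noncomputable def glDualNorm {p m : ℕ} (G : Fin m → Finset (Fin p)) (w : Fin m → ℝ)
    (v : Fin p → ℝ) : ℝ :=
  sSup {x : ℝ | ∃ β : Fin p → ℝ, glNorm G w β ≤ 1 ∧ x = ∑ j, β j * v j}

lemma subNorm_nonneg {p : ℕ} (T : Finset (Fin p)) (β : Fin p → ℝ) : 0 ≤ subNorm T β :=
  Real.sqrt_nonneg _

lemma overlapDeg_pos {p m : ℕ} (G : Fin m → Finset (Fin p))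
    (hcover : ∀ j : Fin p, ∃ g, j ∈ G g) (j : Fin p) : 0 < overlapDeg G j := by
  obtain ⟨g, hg⟩ := hcover j
  exact Finset.card_pos.2 ⟨g, by simp [hg]⟩

lemma sum_groups_eq {p m : ℕ} (G : Fin m → Finset (Fin p)) (f : Fin p → ℝ) :
    ∑ g, ∑ j ∈ G g, f j = ∑ j, (overlapDeg G j : ℝ) * f j := by
  calc ∑ g, ∑ j ∈ G g, f j
      = ∑ g, ∑ j : Fin p, if j ∈ G g then f j else 0 := by
        simp [Finset.sum_ite_mem]
    _ = ∑ j : Fin p, ∑ g, if j ∈ G g then f j else 0 := Finset.sum_comm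
    _ = ∑ j, (overlapDeg G j : ℝ) * f j := by
        refine Finset.sum_congr rfl fun j _ => ?_
        rw [← Finset.sum_filter, Finset.sum_const, nsmul_eq_mul]
        rfl

lemma key_bound {p m : ℕ} (hm : 0 < m) (G : Fin m → Finset (Fin p)) (w : Fin m → ℝ)
    (hw : ∀ g, 0 < w g) (hcover : ∀ j : Fin p, ∃ g, j ∈ G g) (v β : Fin p → ℝ)
    (hβ : glNorm G w β ≤ 1) :
    ∑ j, β j * v j ≤
      ⨆ g : Fin m, (1 / w g) * subNorm (G g) (fun j => v j / (overlapDeg G j : ℝ)) := by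
  set Hv : Fin p → ℝ := fun j => v j / (overlapDeg G j : ℝ) with hHv
  set M : ℝ := ⨆ g : Fin m, (1 / w g) * subNorm (G g) Hv with hM
  have hbdd : BddAbove (Set.range fun g : Fin m => (1 / w g) * subNorm (G g) Hv) :=
    Set.Finite.bddAbove (Set.finite_range _)
  haveI : Nonempty (Fin m) := ⟨⟨0, hm⟩⟩
  have hMg : ∀ g, (1 / w g) * subNorm (G g) Hv ≤ M := fun g => le_ciSup hbdd g
  have hM0 : 0 ≤ M := le_trans
    (mul_nonneg (one_div_nonneg.2 (hw _).le) (subNorm_nonneg _ _)) (hMg ⟨0, hm⟩)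
  have hswap : ∑ j, β j * v j = ∑ g, ∑ j ∈ G g, β j * Hv j := by
    rw [sum_groups_eq]
    refine Finset.sum_congr rfl fun j _ => ?_
    have h0 : (overlapDeg G j : ℝ) ≠ 0 := by
      exact_mod_cast (overlapDeg_pos G hcover j).ne'
    field_simp [hHv]
    simp only [hHv]
    field_simp
  rw [hswap]
  have hstep : ∀ g : Fin m, ∑ j ∈ G g, β j * Hv j ≤ (w g * subNorm (G g) β) * M := by
    intro g
    have hcs : ∑ j ∈ G g, β j * Hv j ≤ subNorm (G g) β * subNorm (G g) Hv :=
      Real.sum_mul_le_sqrt_mul_sqrt _ _ _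
    have heq : subNorm (G g) β * subNorm (G g) Hv
        = (w g * subNorm (G g) β) * ((1 / w g) * subNorm (G g) Hv) := by
      field_simp
      rw [eq_div_iff (hw g).ne']
    calc ∑ j ∈ G g, β j * Hv j ≤ subNorm (G g) β * subNorm (G g) Hv := hcs
      _ = (w g * subNorm (G g) β) * ((1 / w g) * subNorm (G g) Hv) := heq
      _ ≤ (w g * subNorm (G g) β) * M := by
          refine mul_le_mul_of_nonneg_left (hMg g) ?_
          exact mul_nonneg (hw g).le (subNorm_nonneg _ _)
  calc ∑ g, ∑ j ∈ G g, β j * Hv j ≤ ∑ g, (w g * subNorm (G g) β) * M :=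
        Finset.sum_le_sum fun g _ => hstep g
    _ = glNorm G w β * M := by rw [glNorm, ← Finset.sum_mul]
    _ ≤ 1 * M := mul_le_mul_of_nonneg_right hβ hM0
    _ = M := one_mul M

/-- with `H = diag(1/h_1,…,1/h_p)`, the dual norm of the overlapping
group lasso norm satisfies `φ*(v) ≤ max_{g} (1/w_g)‖(Hv)_{G_g}‖₂` for every `v`;
moreover the bound is sharp: it holds with equality whenever `v ≠ 0` and some group
`g₀` attaining the maximum has `h_j = 1` for all `j ∈ G_{g₀}` and `v_{G_{g₀}} ≠ 0`. -/
theorem glDualNorm_le_and_sharp {p m : ℕ} (hp : 0 < p) (hm : 0 < m)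
    (G : Fin m → Finset (Fin p)) (w : Fin m → ℝ)
    (hw : ∀ g, 0 < w g) (hcover : ∀ j : Fin p, ∃ g, j ∈ G g) :
    (∀ v : Fin p → ℝ,
      glDualNorm G w v ≤
        ⨆ g : Fin m, (1 / w g) * subNorm (G g) (fun j => v j / (overlapDeg G j : ℝ))) ∧
    (∀ v : Fin p → ℝ, v ≠ 0 →
      ∀ g₀ : Fin m,
        (∀ g : Fin m, (1 / w g) * subNorm (G g) (fun j => v j / (overlapDeg G j : ℝ)) ≤
          (1 / w g₀) * subNorm (G g₀) (fun j => v j / (overlapDeg G j : ℝ))) →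
        (∀ j ∈ G g₀, overlapDeg G j = 1) →
        (∃ j ∈ G g₀, v j ≠ 0) →
        glDualNorm G w v =
          ⨆ g : Fin m, (1 / w g) * subNorm (G g) (fun j => v j / (overlapDeg G j : ℝ))) := by
  haveI : Nonempty (Fin m) := ⟨⟨0, hm⟩⟩
  have hmem0 : ∀ v : Fin p → ℝ,
      (0 : ℝ) ∈ {x : ℝ | ∃ β : Fin p → ℝ, glNorm G w β ≤ 1 ∧ x = ∑ j, β j * v j} := by
    intro v
    exact ⟨fun _ => 0, by simp [glNorm, subNorm], by simp⟩
  have hub : ∀ v : Fin p → ℝ, glDualNorm G w v ≤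
      ⨆ g : Fin m, (1 / w g) * subNorm (G g) (fun j => v j / (overlapDeg G j : ℝ)) := by
    intro v
    refine csSup_le ⟨0, hmem0 v⟩ ?_
    rintro x ⟨β, hβ, rfl⟩
    exact key_bound hm G w hw hcover v β hβ
  refine ⟨hub, ?_⟩
  intro v hv g₀ hmax hdeg1 ⟨j₀, hj₀, hvj₀⟩
  set Hv : Fin p → ℝ := fun j => v j / (overlapDeg G j : ℝ) with hHv
  have hbdd : BddAbove (Set.range fun g : Fin m => (1 / w g) * subNorm (G g) Hv) :=
    Set.Finite.bddAbove (Set.finite_range _)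
  -- the sup equals the value at g₀
  have hsup : (⨆ g : Fin m, (1 / w g) * subNorm (G g) Hv)
      = (1 / w g₀) * subNorm (G g₀) Hv :=
    le_antisymm (ciSup_le hmax) (le_ciSup hbdd g₀)
  -- Hv agrees with v on G g₀
  have hHveq : subNorm (G g₀) Hv = subNorm (G g₀) v := by
    unfold subNorm
    congr 1
    refine Finset.sum_congr rfl fun j hj => ?_
    simp [hHv, hdeg1 j hj]
  set S : ℝ := subNorm (G g₀) v with hS
  have hSsq : S ^ 2 = ∑ j ∈ G g₀, (v j) ^ 2 := by
    rw [hS, subNorm, Real.sq_sqrt]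
    exact Finset.sum_nonneg fun j _ => sq_nonneg _
  have hSpos : 0 < S := by
    rw [hS, subNorm]
    refine Real.sqrt_pos.2 ?_
    have : 0 < (v j₀) ^ 2 := by positivity
    exact lt_of_lt_of_le this (Finset.single_le_sum (fun j _ => sq_nonneg (v j)) hj₀)
  set c : ℝ := w g₀ * S with hc
  have hcpos : 0 < c := mul_pos (hw g₀) hSpos
  set β : Fin p → ℝ := fun j => if j ∈ G g₀ then v j / c else 0 with hβdef
  -- β vanishes on other groups
  have hβ_other : ∀ g : Fin m, g ≠ g₀ → ∀ j ∈ G g, β j = 0 := by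
    intro g hg j hj
    simp only [hβdef]
    rw [if_neg]
    intro hj0
    have h2 : 2 ≤ overlapDeg G j := by
      have : ({g, g₀} : Finset (Fin m)) ⊆ univ.filter fun g' => j ∈ G g' := by
        intro x hx
        simp only [Finset.mem_insert, Finset.mem_singleton] at hx
        rcases hx with rfl | rfl <;> simp [hj, hj0]
      calc 2 = ({g, g₀} : Finset (Fin m)).card := by rw [Finset.card_insert_of_notMem (by simp [hg]), Finset.card_singleton]
        _ ≤ _ := Finset.card_le_card this
    have := hdeg1 j hj0
    omega
  have hsub_other : ∀ g : Fin m, g ≠ g₀ → subNorm (G g) β = 0 := by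
    intro g hg
    rw [subNorm]
    have : ∑ j ∈ G g, (β j) ^ 2 = 0 :=
      Finset.sum_eq_zero fun j hj => by rw [hβ_other g hg j hj]; ring
    rw [this, Real.sqrt_zero]
  have hsub_g0 : subNorm (G g₀) β = S / c := by
    rw [subNorm]
    have h1 : ∑ j ∈ G g₀, (β j) ^ 2 = (∑ j ∈ G g₀, (v j) ^ 2) / c ^ 2 := by
      rw [Finset.sum_div]
      refine Finset.sum_congr rfl fun j hj => ?_
      simp [hβdef, hj, div_pow]
    rw [h1, ← hSsq, ← div_pow, Real.sqrt_sq (by positivity)]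
  have hglβ : glNorm G w β = 1 := by
    rw [glNorm, Finset.sum_eq_single g₀]
    · rw [hsub_g0, hc]
      field_simp
      exact div_self (hw g₀).ne'
    · intro g _ hg
      rw [hsub_other g hg, mul_zero]
    · simp
  have hdot : ∑ j, β j * v j = S / w g₀ := by
    have : ∑ j, β j * v j = ∑ j ∈ G g₀, v j / c * v j := by
      rw [← Finset.sum_filter_add_sum_filter_not univ (· ∈ G g₀)]
      have h1 : ∑ j ∈ univ.filter (· ∈ G g₀), β j * v j
          = ∑ j ∈ G g₀, v j / c * v j := by
        rw [Finset.filter_mem_eq_inter, Finset.univ_inter]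
        exact Finset.sum_congr rfl fun j hj => by simp [hβdef, hj]
      have h2 : ∑ j ∈ univ.filter (¬ · ∈ G g₀), β j * v j = 0 :=
        Finset.sum_eq_zero fun j hj => by
          simp only [Finset.mem_filter] at hj
          simp [hβdef, hj.2]
      rw [h1, h2, add_zero]
    rw [this]
    have : ∑ j ∈ G g₀, v j / c * v j = (∑ j ∈ G g₀, (v j) ^ 2) / c := by
      rw [Finset.sum_div]
      exact Finset.sum_congr rfl fun j _ => by ring
    rw [this, ← hSsq, hc]
    field_simp
  have hbddS : BddAbove {x : ℝ | ∃ β : Fin p → ℝ, glNorm G w β ≤ 1 ∧ x = ∑ j, β j * v j} := by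
    refine ⟨⨆ g : Fin m, (1 / w g) * subNorm (G g) Hv, ?_⟩
    rintro x ⟨β', hβ', rfl⟩
    exact key_bound hm G w hw hcover v β' hβ'
  have hge : S / w g₀ ≤ glDualNorm G w v := by
    refine le_csSup hbddS ?_
    exact ⟨β, hglβ.le, hdot.symm⟩
  refine le_antisymm (hub v) ?_
  rw [hsup, hHveq]
  calc (1 / w g₀) * S = S / w g₀ := by ring
    _ ≤ glDualNorm G w v := hge
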